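/- Let B be an even cluster in T_d, let C be the set induced by B, and let D be the set induced by C. Then D ⊆ B. -/
import Mathlib


open MeasureTheory

/-- `x` has at least two `G`-neighbors in the set `B`. -/
def TwoNbrsIn {V : Type} (G : SimpleGraph V) (B : Set V) (x : V) : Prop :=
  ∃ y ∈ B, ∃ z ∈ B, y ≠ z ∧ G.Adj x y ∧ G.Adj x z

/-- `x` is an odd vertex: its graph distance to the fixed root `o` is odd. -/
def IsOddV {V : Type} (G : SimpleGraph V) (o x : V) : Prop := Odd (G.dist o x)

/-- `x` is an even vertex: its graph distance to the fixed root `o` is even. -/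
def IsEvenV {V : Type} (G : SimpleGraph V) (o x : V) : Prop := Even (G.dist o x)

/-- `S` is connected with respect to the double-neighbor relation (graph distance 2)
within `S`. -/
def DNConnected {V : Type} (G : SimpleGraph V) (S : Set V) : Prop :=
  ∀ x ∈ S, ∀ y ∈ S,
    Relation.ReflTransGen (fun a b => a ∈ S ∧ b ∈ S ∧ G.dist a b = 2) x y

/-- An odd cluster: a finite nonempty set of odd vertices, connected under the
double-neighbor relation. -/
def IsOddCluster {V : Type} (G : SimpleGraph V) (o : V) (A : Set V) : Prop :=
  A.Finite ∧ A.Nonempty ∧ (∀ x ∈ A, IsOddV G o x) ∧ DNConnected G A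

/-- An even cluster: a finite nonempty set of even vertices, connected under the
double-neighbor relation. -/
def IsEvenCluster {V : Type} (G : SimpleGraph V) (o : V) (A : Set V) : Prop :=
  A.Finite ∧ A.Nonempty ∧ (∀ x ∈ A, IsEvenV G o x) ∧ DNConnected G A

/-- Two vertex sets (of the same parity) are non-adjacent: they are disjoint and no
pair of points of the two sets is at graph distance 2 (so their graph distance
exceeds 2). -/
def NonAdj {V : Type} (G : SimpleGraph V) (A B : Set V) : Prop :=
  Disjoint A B ∧ ∀ a ∈ A, ∀ b ∈ B, G.dist a b ≠ 2

/-- The neighborhood `N(A)` of a vertex set `A`. -/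
def nbhd {V : Type} (G : SimpleGraph V) (A : Set V) : Set V := {y | ∃ x ∈ A, G.Adj x y}

/-- `Prr G A B`: the set of elements of `A` having at least two neighbors in `B`. -/
def Prr {V : Type} (G : SimpleGraph V) (A B : Set V) : Set V := {v ∈ A | TwoNbrsIn G B v}

/-- The set induced by `B`: vertices outside `B` with at least two neighbors in `B`. -/
def inducedSet {V : Type} (G : SimpleGraph V) (B : Set V) : Set V :=
  {x | x ∉ B ∧ TwoNbrsIn G B x}

/-- `ℬ(A)`: the collection of sets `B ⊆ N(A)` such that no proper subset of `B` has the
same `Prr`-value. -/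
def minimalB {V : Type} (G : SimpleGraph V) (A : Set V) : Set (Set V) :=
  {B | B ⊆ nbhd G A ∧ ∀ B' : Set V, B' ⊂ B → Prr G A B' ≠ Prr G A B}

/-- `ℬ(A, C)`: the members of `ℬ(A)` whose `Prr`-value is `C`. -/
def minimalBC {V : Type} (G : SimpleGraph V) (A C : Set V) : Set (Set V) :=
  {B | B ∈ minimalB G A ∧ Prr G A B = C}

open SimpleGraph

/-- No triangles in an acyclic graph. -/
lemma aux_tri {V : Type} {G : SimpleGraph V} (hacyc : G.IsAcyclic) {x y w : V}
    (hxy : G.Adj x y) (hyw : G.Adj y w) (hxw : G.Adj x w) : False := by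
  have p1 : (Walk.cons hxy (Walk.cons hyw Walk.nil)).IsPath := by
    simp [Walk.isPath_def, hxy.ne, hxw.ne, hyw.ne]
  have := hacyc.path_unique ⟨_, p1⟩ (Path.singleton hxw)
  have hl := congrArg (fun p : G.Path x w => p.1.length) this
  simp [Path.singleton] at hl

/-- No 4-cycles (theta) in an acyclic graph. -/
lemma aux_four {V : Type} {G : SimpleGraph V} (hacyc : G.IsAcyclic) {x y z w : V}
    (hxy : G.Adj x y) (hxz : G.Adj x z) (hyw : G.Adj y w) (hzw : G.Adj z w)
    (hyz : y ≠ z) (hxw : x ≠ w) : False := by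
  have p1 : (Walk.cons hxy (Walk.cons hyw Walk.nil)).IsPath := by
    simp [Walk.isPath_def, hxy.ne, hxw, hyw.ne]
  have p2 : (Walk.cons hxz (Walk.cons hzw Walk.nil)).IsPath := by
    simp [Walk.isPath_def, hxz.ne, hxw, hzw.ne]
  have := hacyc.path_unique ⟨_, p1⟩ ⟨_, p2⟩
  have hs := congrArg (fun p : G.Path x w => p.1.support) this
  simp at hs
  exact hyz hs

lemma walk_two {V : Type} {G : SimpleGraph V} {u v : V} (p : G.Walk u v)
    (hp : p.length = 2) :
    ∃ m, G.Adj u m ∧ G.Adj m v ∧ p.support = [u, m, v] := by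
  match p with
  | .nil => simp at hp
  | .cons h .nil => simp at hp
  | .cons h (.cons h2 .nil) => exact ⟨_, h, h2, by simp⟩
  | .cons h (.cons h2 (.cons h3 q)) => simp [Walk.length_cons] at hp

lemma chain_walk {V : Type} {G : SimpleGraph V} (hconn : G.Connected) (B : Set V)
    {b b' : V}
    (h : Relation.ReflTransGen (fun a c => a ∈ B ∧ c ∈ B ∧ G.dist a c = 2) b b')
    (hb : b ∈ B) :
    ∃ w : G.Walk b b', ∀ v ∈ w.support, v ∈ B ∨ v ∈ inducedSet G B := by
  induction h with
  | refl => exact ⟨Walk.nil, by simp [hb]⟩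
  | @tail c c' hchain hstep ih =>
    obtain ⟨w, hw⟩ := ih
    obtain ⟨hc, hc', hdist⟩ := hstep
    obtain ⟨p, hp⟩ := (hconn.preconnected c c').exists_walk_length_eq_dist
    rw [hdist] at hp
    obtain ⟨m, h1, h2, hsupp⟩ := walk_two p hp
    refine ⟨w.append p, ?_⟩
    intro v hv
    rw [Walk.support_append] at hv
    rcases List.mem_append.mp hv with h | h
    · exact hw v h
    · have hvp : v ∈ p.support := List.mem_of_mem_tail h
      rw [hsupp] at hvp
      have hcc' : c ≠ c' := by
        rintro rfl; rw [SimpleGraph.dist_self] at hdist; omega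
      simp only [List.mem_cons, List.not_mem_nil, or_false] at hvp
      rcases hvp with rfl | rfl | rfl
      · exact Or.inl hc
      · by_cases hm : v ∈ B
        · exact Or.inl hm
        · exact Or.inr ⟨hm, c, hc, c', hc', hcc', h1.symm, h2⟩
      · exact Or.inl hc'

theorem induced_induced_subset' {V : Type} {G : SimpleGraph V}
    (hconn : G.Connected) (hacyc : G.IsAcyclic)
    (B : Set V) (hDN : ∀ x ∈ B, ∀ y ∈ B,
      Relation.ReflTransGen (fun a b => a ∈ B ∧ b ∈ B ∧ G.dist a b = 2) x y) :
    inducedSet G (inducedSet G B) ⊆ B := by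
  classical
  intro x hx
  obtain ⟨hxC, y, hy, z, hz, hyz, hxy, hxz⟩ := hx
  by_cases hxB : x ∈ B
  · exact hxB
  obtain ⟨hyB, b1, hb1, b2, hb2, hb12, hyb1, hyb2⟩ := hy
  obtain ⟨hzB, c1, hc1, c2, hc2, hc12, hzc1, hzc2⟩ := hz
  -- basic distinctness
  have hb1x : b1 ≠ x := fun h => hxB (h ▸ hb1)
  have hc1x : c1 ≠ x := fun h => hxB (h ▸ hc1)
  have hb1y : b1 ≠ y := fun h => hyB (h ▸ hb1)
  have hc1z : c1 ≠ z := fun h => hzB (h ▸ hc1)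
  have hb1z : b1 ≠ z := by
    rintro rfl
    exact aux_tri hacyc hxy hyb1 hxz
  have hc1y : c1 ≠ y := by
    rintro rfl
    exact aux_tri hacyc hxz hzc1 hxy
  have hb1c1 : b1 ≠ c1 := by
    rintro rfl
    exact aux_four hacyc hxy hxz hyb1 hzc1 hyz hb1x.symm
  -- explicit path from b1 to c1 through y, x, z
  have hP : (Walk.cons hyb1.symm (Walk.cons hxy.symm (Walk.cons hxz
      (Walk.cons hzc1 Walk.nil)))).IsPath := by
    simp [Walk.isPath_def]
    exact ⟨⟨hb1y, hb1x, hb1z, hb1c1⟩, ⟨hxy.ne', hyz, hc1y.symm⟩,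
      ⟨hxz.ne, hc1x.symm⟩, hc1z.symm⟩
  obtain ⟨w, hw⟩ := chain_walk hconn B (hDN b1 hb1 c1 hc1) hb1
  have heq := hacyc.path_unique ⟨w.bypass, w.bypass_isPath⟩ ⟨_, hP⟩
  have hxw : x ∈ w.support := by
    apply w.support_bypass_subset
    have : w.bypass = Walk.cons hyb1.symm (Walk.cons hxy.symm (Walk.cons hxz
        (Walk.cons hzc1 Walk.nil))) := congrArg Subtype.val heq
    rw [this]
    simp
  rcases hw x hxw with h | h
  · exact h
  · exact absurd h hxC

/-- **Lemma.** On the infinite `d`-regular tree, if `B` is an even cluster, `C` the set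
induced by `B`, and `D` the set induced by `C`, then `D ⊆ B`. -/
theorem induced_induced_subset (d : ℕ) (hd : 3 ≤ d)
    (V : Type) (G : SimpleGraph V) (o : V)
    (hconn : G.Connected) (hacyc : G.IsAcyclic)
    (hreg : ∀ v : V, (G.neighborSet v).ncard = d)
    (B : Set V) (hB : IsEvenCluster G o B) :
    inducedSet G (inducedSet G B) ⊆ B :=
  induced_induced_subset' hconn hacyc B hB.2.2.2
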